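/- Let K be a finite simplicial complex with an injective filtration function f, and for each ε > 0 let Π_ε be the set of simplex orderings induced by injective filtration functions within sup-distance ε of f. If t > 0 is a point of discontinuity of ε ↦ Π_ε (i.e., Π_ε ≠ Π_t for all ε > t), then there exist distinct simplices σ, τ of K with 2t = |f(σ) − f(τ)|. -/

import Mathlib

open scoped BigOperators

/-- A finite simplicial complex on vertex type `V`: a finite family of nonempty
finite vertex sets closed under passing to nonempty subsets. -/
structure SComplex (V : Type*) where
  faces : Finset (Finset V)
  nonempty_of_mem : ∀ s ∈ faces, s.Nonempty
  down_closed : ∀ s ∈ faces, ∀ t ⊆ s, t.Nonempty → t ∈ faces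

variable {V : Type*} [LinearOrder V]

/-- `f` is an injective filtration function on `K`: face-monotone and injective on faces. -/
def SCIsFiltration (K : SComplex V) (f : Finset V → ℝ) : Prop :=
  (∀ s ∈ K.faces, ∀ t ∈ K.faces, s ⊆ t → f s ≤ f t) ∧
  (∀ s ∈ K.faces, ∀ t ∈ K.faces, f s = f t → s = t)

/-- The sup-distance between `f` and `g` over the faces of `K` is at most `ε`. -/
def DistLE (K : SComplex V) (f g : Finset V → ℝ) (ε : ℝ) : Prop :=
  ∀ s ∈ K.faces, |f s - g s| ≤ ε

/-- The sublevel subcomplex `K^f_r = f⁻¹((-∞, r])`. -/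
noncomputable def sublevel (K : SComplex V) (f : Finset V → ℝ) (r : ℝ) : Finset (Finset V) :=
  K.faces.filter (fun s => f s ≤ r)

variable (𝔽 : Type*) [Field 𝔽]

/-- The simplicial boundary operator on chains (finitely supported functions on
simplices), with signs determined by the linear order on vertices. -/
noncomputable def bdry : (Finset V →₀ 𝔽) →ₗ[𝔽] (Finset V →₀ 𝔽) :=
  Finsupp.lsum 𝔽 (fun s => ∑ x ∈ s,
    ((-1 : 𝔽) ^ (s.filter (fun y => y < x)).card) • Finsupp.lsingle (s.erase x))

/-- The submodule of `n`-chains supported on simplices of `L` (of cardinality `n+1`). -/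
def chainsIn (L : Finset (Finset V)) (n : ℕ) : Submodule 𝔽 (Finset V →₀ 𝔽) where
  carrier := {c | ∀ s ∈ c.support, s ∈ L ∧ s.card = n + 1}
  add_mem' := by
    intro c d hc hd s hs
    rcases Finset.mem_union.mp (Finsupp.support_add hs) with h | h
    · exact hc s h
    · exact hd s h
  zero_mem' := by intro s hs; simp at hs
  smul_mem' := by
    intro a c hc s hs
    exact hc s (Finsupp.support_smul hs)

/-- `n`-cycles supported in `L`. -/
noncomputable def cyclesIn (L : Finset (Finset V)) (n : ℕ) : Submodule 𝔽 (Finset V →₀ 𝔽) :=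
  chainsIn 𝔽 L n ⊓ LinearMap.ker (bdry 𝔽)

/-- `n`-boundaries of `(n+1)`-chains supported in `L`. -/
noncomputable def boundariesIn (L : Finset (Finset V)) (n : ℕ) : Submodule 𝔽 (Finset V →₀ 𝔽) :=
  (chainsIn 𝔽 L (n + 1)).map (bdry 𝔽)

/-- `α` is an `n`-cycle in the subcomplex `L`. -/
def IsCycleIn (L : Finset (Finset V)) (n : ℕ) (α : Finset V →₀ 𝔽) : Prop :=
  α ∈ cyclesIn 𝔽 L n

/-- The class of `α` is trivial in `H_n(L)`. -/
def TrivialIn (L : Finset (Finset V)) (n : ℕ) (α : Finset V →₀ 𝔽) : Prop :=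
  α ∈ boundariesIn 𝔽 L n

/-- `α` and `β` are homologous in `L`. -/
def HomologousIn (L : Finset (Finset V)) (n : ℕ) (α β : Finset V →₀ 𝔽) : Prop :=
  α - β ∈ boundariesIn 𝔽 L n

/-- The homology class `[α] ∈ H_n(K^f_a)` is born at `a`: it is a nontrivial cycle
at level `a` and does not come from any strictly earlier level. -/
def BornAt (K : SComplex V) (f : Finset V → ℝ) (n : ℕ) (α : Finset V →₀ 𝔽) (a : ℝ) : Prop :=
  IsCycleIn 𝔽 (sublevel K f a) n α ∧ ¬ TrivialIn 𝔽 (sublevel K f a) n α ∧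
  ∀ q < a, ¬ ∃ β, IsCycleIn 𝔽 (sublevel K f q) n β ∧ HomologousIn 𝔽 (sublevel K f a) n α β

/-- The class `[α]` terminates at level `b` in the filtration `K^f`. -/
def TerminatesAt (K : SComplex V) (f : Finset V → ℝ) (n : ℕ) (α : Finset V →₀ 𝔽) (b : ℝ) : Prop :=
  TrivialIn 𝔽 (sublevel K f b) n α ∧ ∀ q < b, ¬ TrivialIn 𝔽 (sublevel K f q) n α

/-- `Δ` is the terminal simplex of `[α]` in the filtration `K^f`: the simplex added
at the level where `[α]` terminates. -/
def TerminalSimplex (K : SComplex V) (f : Finset V → ℝ) (n : ℕ) (α : Finset V →₀ 𝔽)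
    (Δ : Finset V) : Prop :=
  Δ ∈ K.faces ∧ TerminatesAt 𝔽 K f n α (f Δ)

/-- `Σ_ε`: the set of terminal simplices of `[α]` over all injective filtration
functions within sup-distance `ε` of `f`. -/
def TermSet (K : SComplex V) (f : Finset V → ℝ) (n : ℕ) (α : Finset V →₀ 𝔽) (ε : ℝ) :
    Set (Finset V) :=
  {Δ | ∃ g, SCIsFiltration K g ∧ DistLE K f g ε ∧ TerminalSimplex 𝔽 K g n α Δ}

/-- `τ` gives birth to a class in `H_n(K^f)`. -/
def IsBirthSimplex (K : SComplex V) (f : Finset V → ℝ) (n : ℕ) (τ : Finset V) : Prop :=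
  τ ∈ K.faces ∧ ∃ β : Finset V →₀ 𝔽, BornAt 𝔽 K f n β (f τ)

/-- `τ` terminates a class in `H_n(K^f)`. -/
def IsTerminalSimplexOf (K : SComplex V) (f : Finset V → ℝ) (n : ℕ) (τ : Finset V) : Prop :=
  τ ∈ K.faces ∧ ∃ (β : Finset V →₀ 𝔽) (a : ℝ),
    BornAt 𝔽 K f n β a ∧ TerminatesAt 𝔽 K f n β (f τ)

/-- The linear order on the faces of `K` induced by `g`. -/
def inducedRel (K : SComplex V) (g : Finset V → ℝ) :
    {s // s ∈ K.faces} → {s // s ∈ K.faces} → Prop :=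
  fun s t => g s.1 < g t.1

/-- `Π_ε`: the set of orders on the faces of `K` induced by injective filtration
functions within sup-distance `ε` of `f`. -/
def OrderSet (K : SComplex V) (f : Finset V → ℝ) (ε : ℝ) :
    Set ({s // s ∈ K.faces} → {s // s ∈ K.faces} → Prop) :=
  {r | ∃ g, SCIsFiltration K g ∧ DistLE K f g ε ∧ r = inducedRel K g}

/-- `f` is generic: equal absolute differences of `f`-values occur only for the
same unordered pair of faces. -/
def Generic (K : SComplex V) (f : Finset V → ℝ) : Prop :=
  ∀ s ∈ K.faces, ∀ t ∈ K.faces, ∀ s' ∈ K.faces, ∀ t' ∈ K.faces,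
    s ≠ t → s' ≠ t' → |f s - f t| = |f s' - f t'| →
    (s = s' ∧ t = t') ∨ (s = t' ∧ t = s')

/-- The rank of the map `H_n(K^f_p) → H_n(K^f_q)`, realized as the dimension of
the image of the cycles at level `p` in the quotient by boundaries at level `q`. -/
noncomputable def persRank (K : SComplex V) (f : Finset V → ℝ) (n : ℕ) (p q : ℝ) : ℕ :=
  Module.finrank 𝔽
    ↥(Submodule.map (boundariesIn 𝔽 (sublevel K f q) n).mkQ (cyclesIn 𝔽 (sublevel K f p) n))

/-- `[a, b)` is a bar of the `n`-th persistence module of `K^f`: the standard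
inclusion–exclusion of ranks equals `1` for all sufficiently small offsets. -/
def IsBar (K : SComplex V) (f : Finset V → ℝ) (n : ℕ) (a b : ℝ) : Prop :=
  a < b ∧ ∃ δ > 0, ∀ ε : ℝ, 0 < ε → ε < δ →
    persRank 𝔽 K f n a (b - ε) + persRank 𝔽 K f n (a - ε) b
      = persRank 𝔽 K f n a b + persRank 𝔽 K f n (a - ε) (b - ε) + 1

set_option maxHeartbeats 1000000 in
/-- Realization lemma: if every pair of faces reversed-compatible with distance ε has
f-gap < 2t, then any order achievable within ε is achievable within t. -/
lemma realize (K : SComplex V) (f : Finset V → ℝ) (t ε : ℝ) (ht : 0 < t) (htε : t ≤ ε)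
    (key : ∀ σ ∈ K.faces, ∀ τ ∈ K.faces, f σ - f τ < 2 * ε → f σ - f τ < 2 * t)
    (g : Finset V → ℝ) (hgF : SCIsFiltration K g) (hgD : DistLE K f g ε) :
    ∃ h, SCIsFiltration K h ∧ DistLE K f h t ∧ inducedRel K g = inducedRel K h := by
  rcases eq_or_ne K.faces ∅ with hK | hK
  · refine ⟨g, hgF, ?_, rfl⟩
    intro s hs; rw [hK] at hs; simp at hs
  have hKne : K.faces.Nonempty := Finset.nonempty_iff_ne_empty.mpr hK
  set N : ℕ := K.faces.card with hN
  have hN0 : 0 < (N : ℝ) := by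
    exact_mod_cast Finset.card_pos.mpr hKne
  -- the finite set of margins
  set Γ : Finset ℝ := ((K.faces ×ˢ K.faces).filter (fun p => f p.1 - f p.2 < 2*t)).image
      (fun p => (2*t - (f p.1 - f p.2)) / N) with hΓ
  have hΓne : Γ.Nonempty := by
    obtain ⟨s, hs⟩ := hKne
    refine ⟨(2*t - (f s - f s))/N, Finset.mem_image.mpr ⟨(s, s), ?_, rfl⟩⟩
    refine Finset.mem_filter.mpr ⟨Finset.mem_product.mpr ⟨hs, hs⟩, by simpa using ht⟩
  set η : ℝ := Γ.min' hΓne with hη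
  have hηpos : 0 < η := by
    have := Γ.min'_mem hΓne
    rw [← hη] at this
    rcases Finset.mem_image.mp this with ⟨p, hp, hpe⟩
    have := (Finset.mem_filter.mp hp).2
    rw [← hpe]
    exact div_pos (by linarith) hN0
  have hηle : ∀ σ ∈ K.faces, ∀ τ ∈ K.faces, f σ - f τ < 2*t →
      η ≤ (2*t - (f σ - f τ)) / N := by
    intro σ hσ τ hτ hlt
    exact Finset.min'_le _ _ (Finset.mem_image.mpr ⟨(σ, τ),
      Finset.mem_filter.mpr ⟨Finset.mem_product.mpr ⟨hσ, hτ⟩, hlt⟩, rfl⟩)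
  -- the sets S s
  set S : Finset V → Finset (Finset V) := fun s => K.faces.filter (fun σ => g σ ≤ g s) with hS
  have hmemS : ∀ s ∈ K.faces, s ∈ S s := fun s hs => Finset.mem_filter.mpr ⟨hs, le_refl _⟩
  have hSne : ∀ s ∈ K.faces, (S s).Nonempty := fun s hs => ⟨s, hmemS s hs⟩
  -- define h
  classical
  set h : Finset V → ℝ := fun s =>
    if hs : s ∈ K.faces then (S s).sup' (hSne s hs) (fun σ => f σ - t) + (S s).card * η
    else f s with hh
  have hval : ∀ s (hs : s ∈ K.faces),
      h s = (S s).sup' (hSne s hs) (fun σ => f σ - t) + (S s).card * η := by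
    intro s hs; simp only [hh, dif_pos hs]
  -- strict monotonicity along g
  have hmono : ∀ σ ∈ K.faces, ∀ τ ∈ K.faces, g σ < g τ → h σ < h τ := by
    intro σ hσ τ hτ hlt
    have hsub : S σ ⊆ S τ := by
      intro x hx
      rcases Finset.mem_filter.mp hx with ⟨hx1, hx2⟩
      exact Finset.mem_filter.mpr ⟨hx1, le_trans hx2 hlt.le⟩
    have hssub : S σ ⊂ S τ := by
      refine ⟨hsub, fun hsub' => ?_⟩
      have := Finset.mem_filter.mp (hsub' (hmemS τ hτ))
      exact absurd this.2 (not_le.mpr hlt)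
    have hcard : (S σ).card < (S τ).card := Finset.card_lt_card hssub
    have hsup : (S σ).sup' (hSne σ hσ) (fun σ => f σ - t)
        ≤ (S τ).sup' (hSne τ hτ) (fun σ => f σ - t) :=
      Finset.sup'_le _ _ fun x hx => Finset.le_sup' (fun σ => f σ - t) (hsub hx)
    rw [hval σ hσ, hval τ hτ]
    have : ((S σ).card : ℝ) * η < ((S τ).card : ℝ) * η := by
      apply mul_lt_mul_of_pos_right _ hηpos
      exact_mod_cast hcard
    linarith
  -- bounds
  have hbound : ∀ s ∈ K.faces, |f s - h s| ≤ t := by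
    intro s hs
    obtain ⟨σ, hσS, hσe⟩ := Finset.exists_mem_eq_sup' (hSne s hs) (fun σ => f σ - t)
    rcases Finset.mem_filter.mp hσS with ⟨hσK, hσg⟩
    have hlow : f s - t ≤ (S s).sup' (hSne s hs) (fun σ => f σ - t) :=
      Finset.le_sup' (fun σ => f σ - t) (hmemS s hs)
    have hcard : ((S s).card : ℝ) ≤ N := by
      exact_mod_cast Finset.card_le_card (Finset.filter_subset _ _)
    have hgap : f σ - f s < 2 * t := by
      rcases eq_or_ne σ s with rfl | hne
      · linarith
      · have hlt : g σ < g s := lt_of_le_of_ne hσg (fun he => hne (hgF.2 σ hσK s hs he))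
        have h1 := abs_le.mp (hgD σ hσK)
        have h2 := abs_le.mp (hgD s hs)
        exact key σ hσK s hs (by linarith [h1.1, h1.2, h2.1, h2.2])
    have hηb := hηle σ hσK s hs hgap
    have : ((S s).card : ℝ) * η ≤ N * ((2*t - (f σ - f s)) / N) := by
      apply mul_le_mul hcard hηb hηpos.le hN0.le
    rw [mul_div_cancel₀ _ (ne_of_gt hN0)] at this
    have hcardnn : (0:ℝ) ≤ ((S s).card : ℝ) * η := mul_nonneg (Nat.cast_nonneg _) hηpos.le
    rw [hσe] at hlow
    rw [hval s hs, hσe, abs_le]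
    constructor <;> linarith
  refine ⟨h, ⟨?_, ?_⟩, hbound, ?_⟩
  · intro s hs u hu hsu
    rcases eq_or_ne s u with rfl | hne
    · exact le_refl _
    · have hlt : g s < g u :=
        lt_of_le_of_ne (hgF.1 s hs u hu hsu) (fun he => hne (hgF.2 s hs u hu he))
      exact (hmono s hs u hu hlt).le
  · intro s hs u hu he
    rcases lt_trichotomy (g s) (g u) with hlt | heq | hgt
    · exact absurd he (ne_of_lt (hmono s hs u hu hlt))
    · exact hgF.2 s hs u hu heq
    · exact absurd he.symm (ne_of_lt (hmono u hu s hs hgt))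
  · funext σ τ
    show (g σ.1 < g τ.1) = (h σ.1 < h τ.1)
    apply propext
    constructor
    · exact fun hlt => hmono σ.1 σ.2 τ.1 τ.2 hlt
    · intro hlt
      rcases lt_trichotomy (g σ.1) (g τ.1) with h1 | h1 | h1
      · exact h1
      · exact absurd hlt (by rw [hgF.2 σ.1 σ.2 τ.1 τ.2 h1]; exact lt_irrefl _)
      · exact absurd hlt (not_lt.mpr (hmono τ.1 τ.2 σ.1 σ.2 h1).le)


/-- Lemma `LemmaDiscontinuity`: a point of discontinuity of
`ε ↦ Π_ε` is half the distance between two `f`-values. -/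
theorem stmt4 {V : Type*} [LinearOrder V] (K : SComplex V) (f : Finset V → ℝ)
    (hf : SCIsFiltration K f) (t : ℝ) (ht : 0 < t)
    (hdisc : ∀ ε : ℝ, t < ε → OrderSet K f ε ≠ OrderSet K f t) :
    ∃ σ ∈ K.faces, ∃ τ ∈ K.faces, σ ≠ τ ∧ 2 * t = |f σ - f τ| := by
  classical
  by_contra hcon
  push_neg at hcon
  -- pairs with gap greater than 2t
  set P : Finset (Finset V × Finset V) :=
      (K.faces ×ˢ K.faces).filter (fun p => 2*t < |f p.1 - f p.2|) with hP
  set M : ℝ := if hPne : P.Nonempty then (P.image (fun p => |f p.1 - f p.2|)).min'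
      (hPne.image _) else 2*t + 2 with hM
  have hMgt : 2*t < M := by
    rw [hM]
    split_ifs with hPne
    · obtain ⟨x, hx, hxe⟩ := Finset.mem_image.mp
        ((P.image (fun p => |f p.1 - f p.2|)).min'_mem (hPne.image _))
      rw [← hxe]
      exact (Finset.mem_filter.mp hx).2
    · linarith
  have hMle : ∀ σ ∈ K.faces, ∀ τ ∈ K.faces, 2*t < |f σ - f τ| → M ≤ |f σ - f τ| := by
    intro σ hσ τ hτ hlt
    have hmem : (σ, τ) ∈ P := Finset.mem_filter.mpr ⟨Finset.mem_product.mpr ⟨hσ, hτ⟩, hlt⟩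
    have hPne : P.Nonempty := ⟨_, hmem⟩
    rw [hM, dif_pos hPne]
    exact Finset.min'_le _ _ (Finset.mem_image_of_mem _ hmem)
  set ε : ℝ := t/2 + M/4 with hε
  have htε : t < ε := by rw [hε]; linarith
  have h2ε : 2*ε < M := by rw [hε]; linarith
  have key : ∀ σ ∈ K.faces, ∀ τ ∈ K.faces, f σ - f τ < 2 * ε → f σ - f τ < 2 * t := by
    intro σ hσ τ hτ hlt
    by_contra hge
    push_neg at hge
    have hne : σ ≠ τ := by rintro rfl; simp at hge; linarith
    have habs : |f σ - f τ| = f σ - f τ := abs_of_nonneg (by linarith)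
    have hgt : 2*t < |f σ - f τ| := by
      rcases lt_or_eq_of_le hge with h1 | h1
      · rw [habs]; linarith
      · exact absurd (h1.trans habs.symm) (hcon σ hσ τ hτ hne)
    have := hMle σ hσ τ hτ hgt
    rw [habs] at this
    linarith
  apply hdisc ε htε
  apply Set.eq_of_subset_of_subset
  · rintro r ⟨g, hgF, hgD, rfl⟩
    obtain ⟨h, hhF, hhD, hhr⟩ := realize K f t ε ht htε.le key g hgF hgD
    exact ⟨h, hhF, hhD, hhr⟩
  · rintro r ⟨g, hgF, hgD, rfl⟩
    exact ⟨g, hgF, fun s hs => le_trans (hgD s hs) htε.le, rfl⟩
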